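/- Let r ≥ 1, x_i = x(z_i) = z_i·e^{-z_i^r}. The function F(z₁,z₂) = log((z₁-z₂)/(x(z₁)-x(z₂))) - (z₁^r + z₂^r), which is holomorphic near (0,0), satisfies the PDE (1/r)·(z₁∂/∂z₁ + z₂∂/∂z₂)F = (x₁z₁^r - x₂z₂^r)/(x₁-x₂) - (z₁^r + z₂^r), and vanishes when z₁ = 0. -/

import Mathlib

open Real

/-- The parametrization `x(z) = z·e^{-z^r}` of the r-Lambert curve. -/
noncomputable def rLambertX (r : ℕ) (z : ℂ) : ℂ := z * Complex.exp (-(z ^ r))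

/-- The free energy `F₀,₂` in the spectral-curve coordinates:
`F(z₁,z₂) = log((z₁-z₂)/(x(z₁)-x(z₂))) - (z₁^r + z₂^r)`. -/
noncomputable def F02 (r : ℕ) (z₁ z₂ : ℂ) : ℂ :=
  Complex.log ((z₁ - z₂) / (rLambertX r z₁ - rLambertX r z₂)) - (z₁ ^ r + z₂ ^ r)

/-- The key rational-function identity behind the PDE. -/
lemma F02_alg (n z₁ z₂ e₁ e₂ p₁ p₂ : ℂ) (hn : n ≠ 0) (hd : z₁ - z₂ ≠ 0)
    (hA : z₁ * e₁ - z₂ * e₂ ≠ 0) :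
    (1/n) * (z₁ * ((1 * (z₁ * e₁ - z₂ * e₂) - (z₁ - z₂) * (e₁ * (1 - n * (z₁ * p₁))))
        / (z₁ * e₁ - z₂ * e₂) ^ 2 / ((z₁ - z₂) / (z₁ * e₁ - z₂ * e₂)) - n * p₁)
      + z₂ * (((0 - 1) * (z₁ * e₁ - z₂ * e₂) - (z₁ - z₂) * (0 - e₂ * (1 - n * (z₂ * p₂))))
        / (z₁ * e₁ - z₂ * e₂) ^ 2 / ((z₁ - z₂) / (z₁ * e₁ - z₂ * e₂)) - n * p₂))
      = (z₁ * e₁ * (z₁ * p₁) - z₂ * e₂ * (z₂ * p₂)) / (z₁ * e₁ - z₂ * e₂)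
        - (z₁ * p₁ + z₂ * p₂) := by
  field_simp
  ring

/-- Derivative of the r-Lambert parametrization. -/
lemma hasDerivAt_rLambertX (s : ℕ) (z : ℂ) :
    HasDerivAt (rLambertX (s + 1))
      (Complex.exp (-(z ^ (s + 1))) * (1 - ((s : ℂ) + 1) * (z * z ^ s))) z := by
  have h1 : HasDerivAt (fun w : ℂ => -(w ^ (s + 1))) (-(((s : ℂ) + 1) * z ^ s)) z := by
    simpa using (hasDerivAt_pow (s + 1) z).fun_neg
  have h3 : HasDerivAt (fun w : ℂ => id w * Complex.exp (-(w ^ (s + 1)))) _ z :=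
    (hasDerivAt_id z).fun_mul h1.cexp
  convert h3 using 1
  · rfl
  simp only [id_eq]
  rw [pow_succ]
  ring

/-- `F(z₁,z₂) = log((z₁-z₂)/(x₁-x₂)) - (z₁^r + z₂^r)` satisfies the
PDE `(1/r)(z₁∂₁ + z₂∂₂)F = (x₁z₁^r - x₂z₂^r)/(x₁-x₂) - (z₁^r + z₂^r)` (off the
diagonal, with the ratio in the domain of the logarithm), and it vanishes when
`z₁ = 0` (with the branch condition `Im z₂^r ∈ (-π, π]`). -/
theorem F02_pde_and_initial_condition (r : ℕ) (hr : 1 ≤ r) :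
    (∀ z₁ z₂ : ℂ, z₁ ≠ z₂ → rLambertX r z₁ ≠ rLambertX r z₂ →
      (z₁ - z₂) / (rLambertX r z₁ - rLambertX r z₂) ∈ Complex.slitPlane →
      (1 / (r : ℂ)) * (z₁ * deriv (fun w => F02 r w z₂) z₁
          + z₂ * deriv (fun w => F02 r z₁ w) z₂)
        = (rLambertX r z₁ * z₁ ^ r - rLambertX r z₂ * z₂ ^ r)
            / (rLambertX r z₁ - rLambertX r z₂) - (z₁ ^ r + z₂ ^ r))
    ∧ ∀ z₂ : ℂ, z₂ ≠ 0 → (z₂ ^ r).im ∈ Set.Ioc (-π) π → F02 r 0 z₂ = 0 := by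
  obtain ⟨s, rfl⟩ : ∃ s, r = s + 1 := ⟨r - 1, (Nat.succ_pred_eq_of_pos hr).symm⟩
  constructor
  · intro z₁ z₂ hne hxne hslit
    have hd : z₁ - z₂ ≠ 0 := sub_ne_zero.mpr hne
    have hA : rLambertX (s + 1) z₁ - rLambertX (s + 1) z₂ ≠ 0 := sub_ne_zero.mpr hxne
    have hn : ((s : ℂ) + 1) ≠ 0 := by
      have h : ((s + 1 : ℕ) : ℂ) ≠ 0 := Nat.cast_ne_zero.mpr (Nat.succ_ne_zero s)
      push_cast at h
      exact h
    have hg := ((hasDerivAt_id z₁).sub_const z₂).div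
      ((hasDerivAt_rLambertX s z₁).sub_const (rLambertX (s + 1) z₂)) hA
    have hh := ((hasDerivAt_const z₂ z₁).sub (hasDerivAt_id z₂)).div
      ((hasDerivAt_const z₂ (rLambertX (s + 1) z₁)).sub (hasDerivAt_rLambertX s z₂)) hA
    simp only [id_eq] at hg hh
    have hp₁ : HasDerivAt (fun w : ℂ => w ^ (s + 1) + z₂ ^ (s + 1))
        (((s : ℂ) + 1) * z₁ ^ s) z₁ := by
      simpa using (hasDerivAt_pow (s + 1) z₁).add_const (z₂ ^ (s + 1))
    have hp₂ : HasDerivAt (fun w : ℂ => z₁ ^ (s + 1) + w ^ (s + 1))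
        (((s : ℂ) + 1) * z₂ ^ s) z₂ := by
      simpa using (hasDerivAt_pow (s + 1) z₂).const_add (z₁ ^ (s + 1))
    have hF₁ := (hg.clog hslit).sub hp₁
    have hF₂ := (hh.clog hslit).sub hp₂
    have hD₁ : deriv (fun w => F02 (s + 1) w z₂) z₁ =
        (1 * (rLambertX (s + 1) z₁ - rLambertX (s + 1) z₂) - (z₁ - z₂) *
            (Complex.exp (-(z₁ ^ (s + 1))) * (1 - ((s : ℂ) + 1) * (z₁ * z₁ ^ s))))
          / (rLambertX (s + 1) z₁ - rLambertX (s + 1) z₂) ^ 2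
          / ((z₁ - z₂) / (rLambertX (s + 1) z₁ - rLambertX (s + 1) z₂))
          - ((s : ℂ) + 1) * z₁ ^ s := by
      exact HasDerivAt.deriv hF₁
    have hD₂ : deriv (fun w => F02 (s + 1) z₁ w) z₂ =
        ((0 - 1) * (rLambertX (s + 1) z₁ - rLambertX (s + 1) z₂) - (z₁ - z₂) *
            (0 - Complex.exp (-(z₂ ^ (s + 1))) * (1 - ((s : ℂ) + 1) * (z₂ * z₂ ^ s))))
          / (rLambertX (s + 1) z₁ - rLambertX (s + 1) z₂) ^ 2
          / ((z₁ - z₂) / (rLambertX (s + 1) z₁ - rLambertX (s + 1) z₂))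
          - ((s : ℂ) + 1) * z₂ ^ s := by
      exact HasDerivAt.deriv hF₂
    rw [hD₁, hD₂]
    have hx₁ : rLambertX (s + 1) z₁ = z₁ * Complex.exp (-(z₁ ^ (s + 1))) := rfl
    have hx₂ : rLambertX (s + 1) z₂ = z₂ * Complex.exp (-(z₂ ^ (s + 1))) := rfl
    have hA' : z₁ * Complex.exp (-(z₁ ^ (s + 1))) - z₂ * Complex.exp (-(z₂ ^ (s + 1))) ≠ 0 := by
      rwa [hx₁, hx₂] at hA
    rw [hx₁, hx₂]
    push_cast
    calc (1 / ((s : ℂ) + 1)) * (z₁ * ((1 * (z₁ * Complex.exp (-(z₁ ^ (s + 1)))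
            - z₂ * Complex.exp (-(z₂ ^ (s + 1)))) - (z₁ - z₂) *
            (Complex.exp (-(z₁ ^ (s + 1))) * (1 - ((s : ℂ) + 1) * (z₁ * z₁ ^ s))))
          / (z₁ * Complex.exp (-(z₁ ^ (s + 1))) - z₂ * Complex.exp (-(z₂ ^ (s + 1)))) ^ 2
          / ((z₁ - z₂) / (z₁ * Complex.exp (-(z₁ ^ (s + 1)))
            - z₂ * Complex.exp (-(z₂ ^ (s + 1)))))
          - ((s : ℂ) + 1) * z₁ ^ s)
        + z₂ * (((0 - 1) * (z₁ * Complex.exp (-(z₁ ^ (s + 1)))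
            - z₂ * Complex.exp (-(z₂ ^ (s + 1)))) - (z₁ - z₂) *
            (0 - Complex.exp (-(z₂ ^ (s + 1))) * (1 - ((s : ℂ) + 1) * (z₂ * z₂ ^ s))))
          / (z₁ * Complex.exp (-(z₁ ^ (s + 1))) - z₂ * Complex.exp (-(z₂ ^ (s + 1)))) ^ 2
          / ((z₁ - z₂) / (z₁ * Complex.exp (-(z₁ ^ (s + 1)))
            - z₂ * Complex.exp (-(z₂ ^ (s + 1)))))
          - ((s : ℂ) + 1) * z₂ ^ s))
        = (z₁ * Complex.exp (-(z₁ ^ (s + 1))) * (z₁ * z₁ ^ s)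
            - z₂ * Complex.exp (-(z₂ ^ (s + 1))) * (z₂ * z₂ ^ s))
          / (z₁ * Complex.exp (-(z₁ ^ (s + 1))) - z₂ * Complex.exp (-(z₂ ^ (s + 1))))
          - (z₁ * z₁ ^ s + z₂ * z₂ ^ s) :=
          F02_alg ((s : ℂ) + 1) z₁ z₂ _ _ (z₁ ^ s) (z₂ ^ s) hn hd hA'
      _ = (z₁ * Complex.exp (-(z₁ ^ (s + 1))) * z₁ ^ (s + 1)
            - z₂ * Complex.exp (-(z₂ ^ (s + 1))) * z₂ ^ (s + 1))
          / (z₁ * Complex.exp (-(z₁ ^ (s + 1))) - z₂ * Complex.exp (-(z₂ ^ (s + 1))))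
          - (z₁ ^ (s + 1) + z₂ ^ (s + 1)) := by
          rw [pow_succ z₁ s, pow_succ z₂ s]; ring_nf
  · intro z₂ hz₂ him
    have key : (0 - z₂) / (rLambertX (s + 1) 0 - rLambertX (s + 1) z₂)
        = Complex.exp (z₂ ^ (s + 1)) := by
      simp only [rLambertX, zero_pow (Nat.succ_ne_zero s), zero_mul, zero_sub,
        neg_div_neg_eq, Complex.exp_neg]
      field_simp
    simp only [F02, key, Complex.log_exp him.1 him.2]
    simp [zero_pow (Nat.succ_ne_zero s)]
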